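/- Let g₀, g₁, g₂ ∈ ℂ[[x,y]]. Then dim_ℂ ℂ[[x,y]]/(g₀, g₁g₂) = dim_ℂ ℂ[[x,y]]/(g₀,g₁) + dim_ℂ ℂ[[x,y]]/(g₀,g₂) and dim_ℂ ℂ[[x,y]]/(g₀g₁, g₂) = dim_ℂ ℂ[[x,y]]/(g₀,g₂) + dim_ℂ ℂ[[x,y]]/(g₁,g₂), as elements of ℕ∪{∞}. -/

import Mathlib

set_option synthInstance.maxHeartbeats 400000
set_option maxHeartbeats 1000000

/-- The formal power series ring `ℂ[[x,y]]`. -/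
noncomputable abbrev CXY : Type := MvPowerSeries (Fin 2) ℂ

/-- The dimension of `ℂ[[x,y]] / I` as a `ℂ`-vector space, in `ℕ∞`. -/
noncomputable def dimCXY (I : Ideal CXY) : ℕ∞ :=
  (Module.rank ℂ (CXY ⧸ I)).toENat

open MvPowerSeries Finsupp

private lemma X_pow_ne_zero' (s : Fin 2) (n : ℕ) : (X s : CXY) ^ n ≠ 0 := by
  intro h
  have h2 := congrArg (coeff (single s n)) h
  rw [coeff_X_pow, if_pos rfl, map_zero] at h2
  exact one_ne_zero h2

/-- If `x^n * b = y^m * a` then `y^m ∣ b`. -/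
private lemma lemA {n m : ℕ} {a b : CXY} (h : (X 0 : CXY) ^ n * b = (X 1 : CXY) ^ m * a) :
    (X 1 : CXY) ^ m ∣ b := by
  rw [X_pow_dvd_iff]
  intro e he
  have h1 : coeff (single (0 : Fin 2) n + e) ((X 0 : CXY) ^ n * b) = coeff e b := by
    rw [X_pow_eq, coeff_add_monomial_mul, one_mul]
  have h2 : coeff (single (0 : Fin 2) n + e) ((X 1 : CXY) ^ m * a) = 0 := by
    refine (X_pow_dvd_iff.mp (dvd_mul_right _ a)) _ ?_
    have h3 : (single (0 : Fin 2) n + e) 1 = e 1 := by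
      rw [Finsupp.add_apply, Finsupp.single_eq_of_ne (by decide), zero_add]
    rw [h3]; exact he
  rw [← h1, h]; exact h2

/-- Saturation: if `x^n * t ∈ (g)` and `y^m * t ∈ (g)` then `t ∈ (g)`. -/
private lemma lemB {g t : CXY} {n m : ℕ}
    (hx : (X 0 : CXY) ^ n * t ∈ Ideal.span {g})
    (hy : (X 1 : CXY) ^ m * t ∈ Ideal.span {g}) :
    t ∈ Ideal.span {g} := by
  rw [Ideal.mem_span_singleton] at hx hy ⊢
  obtain ⟨a, ha⟩ := hx
  obtain ⟨b, hb⟩ := hy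
  rcases eq_or_ne g 0 with rfl | hg
  · simp only [zero_mul] at ha
    rcases mul_eq_zero.mp ha with h | h
    · exact absurd h (X_pow_ne_zero' 0 n)
    · rw [h]
  · have key : g * ((X 1 : CXY) ^ m * a) = g * ((X 0 : CXY) ^ n * b) := by
      linear_combination (-((X 1 : CXY) ^ m)) * ha + ((X 0 : CXY) ^ n) * hb
    have hcancel : (X 1 : CXY) ^ m * a = (X 0 : CXY) ^ n * b := mul_left_cancel₀ hg key
    obtain ⟨c, hc⟩ := lemA hcancel.symm
    have h4 : (X 1 : CXY) ^ m * t = (X 1 : CXY) ^ m * (g * c) := by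
      rw [hb, hc]; ring
    exact ⟨c, mul_left_cancel₀ (X_pow_ne_zero' 1 m) h4⟩

/-- If `CXY ⧸ I` is finite-dimensional then some power of `X s` lies in `I`. -/
private lemma lemC {I : Ideal CXY} (h : Module.rank ℂ (CXY ⧸ I) < Cardinal.aleph0)
    (s : Fin 2) : ∃ n : ℕ, (X s : CXY) ^ n ∈ I := by
  classical
  have hni : ¬ LinearIndependent ℂ (fun k : ℕ => (Ideal.Quotient.mk I) ((X s : CXY) ^ k)) := by
    intro hli
    exact absurd hli.aleph0_le_rank (not_le.mpr h)
  rw [linearIndependent_iff'] at hni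
  push_neg at hni
  obtain ⟨t, g, hsum, i₀, hi₀, hg₀⟩ := hni
  set s' : Finset ℕ := t.filter (fun i => g i ≠ 0) with hs'
  have hne : s'.Nonempty := ⟨i₀, Finset.mem_filter.mpr ⟨hi₀, hg₀⟩⟩
  set k := s'.min' hne with hk
  have hk' : k ∈ s' := Finset.min'_mem _ _
  have hgk : g k ≠ 0 := (Finset.mem_filter.mp hk').2
  set p : CXY := ∑ i ∈ s', g i • (X s : CXY) ^ i with hp
  have hpI : p ∈ I := by
    have hmk : (Ideal.Quotient.mkₐ ℂ I) (∑ i ∈ t, g i • (X s : CXY) ^ i) = 0 := by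
      rw [map_sum]
      simp only [map_smul]
      simpa [Ideal.Quotient.mkₐ_eq_mk] using hsum
    have h1 : (∑ i ∈ t, g i • (X s : CXY) ^ i) ∈ I := by
      rw [Ideal.Quotient.mkₐ_eq_mk] at hmk
      exact (Ideal.Quotient.eq_zero_iff_mem).mp hmk
    have h2 : p = ∑ i ∈ t, g i • (X s : CXY) ^ i := by
      rw [hp, hs']
      exact Finset.sum_filter_of_ne (fun i _ hne0 hgi => hne0 (by rw [hgi, zero_smul]))
    rw [h2]; exact h1
  set u : CXY := ∑ i ∈ s', g i • (X s : CXY) ^ (i - k) with hu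
  have hpu : p = (X s : CXY) ^ k * u := by
    rw [hu, Finset.mul_sum, hp]
    refine Finset.sum_congr rfl fun i hi => ?_
    have hki : k ≤ i := Finset.min'_le _ _ hi
    rw [mul_smul_comm, ← pow_add, Nat.add_sub_cancel' hki]
  have hcu : (coeff (0 : Fin 2 →₀ ℕ)) u = g k := by
    rw [hu, map_sum]
    have hterm : ∀ i ∈ s',
        (coeff (0 : Fin 2 →₀ ℕ)) (g i • (X s : CXY) ^ (i - k)) =
          if i = k then g i else 0 := by
      intro i hi
      rw [map_smul, coeff_X_pow]
      rcases eq_or_ne i k with rfl | hik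
      · simp
      · have hki : k ≤ i := Finset.min'_le _ _ hi
        have hik0 : i - k ≠ 0 := Nat.sub_ne_zero_of_lt (lt_of_le_of_ne hki (Ne.symm hik))
        have hns : (0 : Fin 2 →₀ ℕ) ≠ single s (i - k) := by
          intro h0
          exact hik0 (Finsupp.single_eq_zero.mp h0.symm)
        rw [if_neg hns, smul_zero, if_neg hik]
    rw [Finset.sum_congr rfl hterm, Finset.sum_ite_eq' s' k g, if_pos hk']
  have hu_unit : IsUnit u := by
    rw [MvPowerSeries.isUnit_iff_constantCoeff]
    rw [← coeff_zero_eq_constantCoeff_apply, hcu]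
    exact isUnit_iff_ne_zero.mpr hgk
  obtain ⟨w, hw⟩ := hu_unit
  refine ⟨k, ?_⟩
  have hX : (X s : CXY) ^ k = p * ↑w⁻¹ := by
    rw [hpu, ← hw, mul_assoc, Units.mul_inv, mul_one]
  rw [hX]
  exact Ideal.mul_mem_right _ _ hpI

/-- Key additivity lemma. -/
private lemma keyLemma (a b c : CXY) :
    dimCXY (Ideal.span {a, b * c}) =
      dimCXY (Ideal.span {a, b}) + dimCXY (Ideal.span {a, c}) := by
  classical
  set I1 := Ideal.span {a, b} with hI1
  set I2 := Ideal.span {a, c} with hI2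
  set J := Ideal.span {a, b * c} with hJdef
  have haJ : a ∈ J := Ideal.subset_span (Set.mem_insert _ _)
  have haI1 : a ∈ I1 := Ideal.subset_span (Set.mem_insert _ _)
  have hbI1 : b ∈ I1 := Ideal.subset_span (Set.mem_insert_of_mem _ rfl)
  have hJ1 : J ≤ I1 := by
    rw [hJdef, Ideal.span_le]
    intro z hz
    simp only [Set.mem_insert_iff, Set.mem_singleton_iff] at hz
    rcases hz with rfl | rfl
    · exact haI1
    · exact Ideal.mul_mem_right _ _ hbI1
  -- the factor map π : CXY/J → CXY/I1
  have hJker : (J : Submodule CXY CXY) ≤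
      LinearMap.ker (Submodule.mkQ (I1 : Submodule CXY CXY)) := by
    rw [Submodule.ker_mkQ]; exact hJ1
  set π0 : (CXY ⧸ J) →ₗ[CXY] (CXY ⧸ I1) :=
    Submodule.liftQ (J : Submodule CXY CXY) (Submodule.mkQ (I1 : Submodule CXY CXY)) hJker
    with hπ0
  set π : (CXY ⧸ J) →ₗ[ℂ] (CXY ⧸ I1) := π0.restrictScalars ℂ with hπdef
  have hπ_apply : ∀ w : CXY,
      π (Submodule.Quotient.mk w) = (Submodule.Quotient.mk w : CXY ⧸ I1) :=
    fun _ => rfl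
  have hπs : Function.Surjective π := by
    intro z
    obtain ⟨w, rfl⟩ := Submodule.Quotient.mk_surjective _ z
    exact ⟨Submodule.Quotient.mk w, hπ_apply w⟩
  -- multiplication by b map μ : CXY/I2 → CXY/J
  have hμker : (I2 : Submodule CXY CXY) ≤
      LinearMap.ker ((Submodule.mkQ (J : Submodule CXY CXY)).comp
        (LinearMap.toSpanSingleton CXY CXY b)) := by
    intro v hv
    rw [LinearMap.mem_ker, LinearMap.comp_apply, LinearMap.toSpanSingleton_apply,
      Submodule.mkQ_apply, Submodule.Quotient.mk_eq_zero]
    obtain ⟨u, w, huw⟩ := Ideal.mem_span_pair.mp hv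
    rw [smul_eq_mul]
    exact Ideal.mem_span_pair.mpr ⟨u * b, w, by linear_combination b * huw⟩
  set μ0 : (CXY ⧸ I2) →ₗ[CXY] (CXY ⧸ J) :=
    Submodule.liftQ (I2 : Submodule CXY CXY)
      ((Submodule.mkQ (J : Submodule CXY CXY)).comp
        (LinearMap.toSpanSingleton CXY CXY b)) hμker with hμ0
  set μ : (CXY ⧸ I2) →ₗ[ℂ] (CXY ⧸ J) := μ0.restrictScalars ℂ with hμdef
  have hμ_apply : ∀ w : CXY,
      μ (Submodule.Quotient.mk w) = (Submodule.Quotient.mk (w * b) : CXY ⧸ J) :=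
    fun _ => rfl
  by_cases h1 : Module.rank ℂ (CXY ⧸ I1) < Cardinal.aleph0
  · -- finite-dimensional case
    obtain ⟨n, hxn⟩ := lemC h1 0
    obtain ⟨m, hym⟩ := lemC h1 1
    have hinj : Function.Injective μ := by
      rw [← LinearMap.ker_eq_bot, Submodule.eq_bot_iff]
      intro z hz
      obtain ⟨w, rfl⟩ := Submodule.Quotient.mk_surjective _ z
      rw [LinearMap.mem_ker, hμ_apply, Submodule.Quotient.mk_eq_zero] at hz
      rw [Submodule.Quotient.mk_eq_zero]
      obtain ⟨u, v, huv⟩ := Ideal.mem_span_pair.mp hz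
      set t := w - v * c with ht
      have hbt : b * t ∈ Ideal.span {a} := by
        rw [Ideal.mem_span_singleton]
        exact ⟨u, by linear_combination -huv + b * ht⟩
      have hxt : (X 0 : CXY) ^ n * t ∈ Ideal.span {a} := by
        obtain ⟨p, q, hpq⟩ := Ideal.mem_span_pair.mp hxn
        rw [Ideal.mem_span_singleton] at hbt ⊢
        obtain ⟨d, hd⟩ := hbt
        exact ⟨p * t + q * d, by linear_combination (-t) * hpq + q * hd⟩
      have hyt : (X 1 : CXY) ^ m * t ∈ Ideal.span {a} := by
        obtain ⟨p, q, hpq⟩ := Ideal.mem_span_pair.mp hym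
        rw [Ideal.mem_span_singleton] at hbt ⊢
        obtain ⟨d, hd⟩ := hbt
        exact ⟨p * t + q * d, by linear_combination (-t) * hpq + q * hd⟩
      have htA : t ∈ Ideal.span {a} := lemB hxt hyt
      obtain ⟨d, hd⟩ := Ideal.mem_span_singleton.mp htA
      exact Ideal.mem_span_pair.mpr ⟨d, v, by linear_combination -hd + ht⟩
    have hker : LinearMap.ker π = LinearMap.range μ := by
      ext z
      obtain ⟨w, rfl⟩ := Submodule.Quotient.mk_surjective _ z
      constructor
      · intro hz
        rw [LinearMap.mem_ker, hπ_apply, Submodule.Quotient.mk_eq_zero] at hz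
        obtain ⟨u, v, huv⟩ := Ideal.mem_span_pair.mp hz
        refine ⟨Submodule.Quotient.mk v, ?_⟩
        rw [hμ_apply, Submodule.Quotient.eq]
        have hvb : v * b - w = -u * a := by linear_combination huv
        rw [hvb]
        exact Ideal.mul_mem_left _ (-u) haJ
      · rintro ⟨z', hz'⟩
        obtain ⟨v, rfl⟩ := Submodule.Quotient.mk_surjective _ z'
        rw [hμ_apply] at hz'
        rw [LinearMap.mem_ker, ← hz', hπ_apply, Submodule.Quotient.mk_eq_zero]
        exact Ideal.mul_mem_left _ v hbI1
    have e1 : Module.rank ℂ ((CXY ⧸ J) ⧸ LinearMap.ker π) = Module.rank ℂ (CXY ⧸ I1) :=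
      (LinearMap.quotKerEquivOfSurjective π hπs).rank_eq
    have e2 : Module.rank ℂ (LinearMap.ker π) = Module.rank ℂ (CXY ⧸ I2) := by
      rw [hker]
      exact (rank_range_of_injective μ hinj)
    have e3 := Submodule.rank_quotient_add_rank (LinearMap.ker π)
    rw [e1, e2] at e3
    show (Module.rank ℂ (CXY ⧸ J)).toENat =
      (Module.rank ℂ (CXY ⧸ I1)).toENat + (Module.rank ℂ (CXY ⧸ I2)).toENat
    rw [← e3, map_add]
  · -- infinite-dimensional case
    have hI1top : dimCXY I1 = ⊤ := Cardinal.toENat_eq_top.mpr (not_lt.mp h1)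
    have hJtop : dimCXY J = ⊤ := by
      show (Module.rank ℂ (CXY ⧸ J)).toENat = ⊤
      exact Cardinal.toENat_eq_top.mpr
        (le_trans (not_lt.mp h1) (LinearMap.rank_le_of_surjective π hπs))
    rw [hJtop, hI1top, top_add]

/-- For `g₀, g₁, g₂ ∈ ℂ[[x,y]]`:
`dim ℂ[[x,y]]/(g₀, g₁g₂) = dim ℂ[[x,y]]/(g₀,g₁) + dim ℂ[[x,y]]/(g₀,g₂)` and
`dim ℂ[[x,y]]/(g₀g₁, g₂) = dim ℂ[[x,y]]/(g₀,g₂) + dim ℂ[[x,y]]/(g₁,g₂)`, in `ℕ∞`. -/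
theorem stmt13 (g₀ g₁ g₂ : CXY) :
    dimCXY (Ideal.span {g₀, g₁ * g₂}) =
      dimCXY (Ideal.span {g₀, g₁}) + dimCXY (Ideal.span {g₀, g₂}) ∧
    dimCXY (Ideal.span {g₀ * g₁, g₂}) =
      dimCXY (Ideal.span {g₀, g₂}) + dimCXY (Ideal.span {g₁, g₂}) := by
  constructor
  · exact keyLemma g₀ g₁ g₂
  · have h := keyLemma g₂ g₀ g₁
    rw [Set.pair_comm g₂ (g₀ * g₁), Set.pair_comm g₂ g₀, Set.pair_comm g₂ g₁] at h
    exact h
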